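/- arXiv:2108.03717 — 2 statements merged into one kernel-verified Lean document; each statement's English description precedes it below -/
import Mathlib

section
/- Let φ : ℝ≥0 × Ω̄ → ℝ be differentiable at (t₀, x₀) with ∇φ(t₀,x₀) ≠ 0 (spatial gradient), and let k(t₀,x₀) > 0. If u₀ ∈ 𝕊^{d-1} satisfies lim_{h→0⁺} [φ(t₀+h, x₀ + h k(t₀,x₀) u₀) - φ(t₀,x₀)] / h = -1 and φ satisfies -∂_t φ(t₀,x₀) + |∇φ(t₀,x₀)| k(t₀,x₀) - 1 = 0, then u₀ = -∇φ(t₀,x₀)/|∇φ(t₀,x₀)|. Conversely, this unit vector satisfies the limit condition. -/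
open Filter Topology

/-- if `φ` is differentiable at `(t₀,x₀)` with nonzero spatial gradient `g`
and time derivative `pt`, satisfies the Hamilton–Jacobi equation
`-∂_t φ + |∇φ| k = 1` there, and `k(t₀,x₀) = k₀ > 0`, then a unit vector `u₀` is a
direction of maximal descent (the one-sided difference quotient tends to `-1`) if and only
if `u₀ = -g/|g|`. -/
theorem stmt6 {d : ℕ} (φ : ℝ → EuclideanSpace ℝ (Fin d) → ℝ)
    (t₀ : ℝ) (x₀ : EuclideanSpace ℝ (Fin d))
    (pt : ℝ) (g : EuclideanSpace ℝ (Fin d)) (hg : g ≠ 0)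
    (L : ℝ × EuclideanSpace ℝ (Fin d) →L[ℝ] ℝ)
    (hL : ∀ (s : ℝ) (w : EuclideanSpace ℝ (Fin d)), L (s, w) = pt * s + (inner ℝ g w : ℝ))
    (hdiff : HasFDerivAt (fun p : ℝ × EuclideanSpace ℝ (Fin d) => φ p.1 p.2) L (t₀, x₀))
    (k₀ : ℝ) (hk₀ : 0 < k₀)
    (hHJ : -pt + ‖g‖ * k₀ - 1 = 0)
    (u₀ : EuclideanSpace ℝ (Fin d)) (hu : ‖u₀‖ = 1) :
    Tendsto (fun h : ℝ => (φ (t₀ + h) (x₀ + (h * k₀) • u₀) - φ t₀ x₀) / h)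
        (nhdsWithin 0 (Set.Ioi 0)) (nhds (-1))
      ↔ u₀ = -(‖g‖⁻¹ • g) := by
  have hgn : (0:ℝ) < ‖g‖ := norm_pos_iff.mpr hg
  -- the curve h ↦ (t₀+h, x₀+(h k₀)•u₀)
  have hcurve : HasDerivAt (fun h : ℝ => ((t₀ + h, x₀ + (h * k₀) • u₀) :
      ℝ × EuclideanSpace ℝ (Fin d))) (1, k₀ • u₀) 0 := by
    apply HasDerivAt.prodMk
    · simpa using (hasDerivAt_id (0:ℝ)).const_add t₀
    · have : HasDerivAt (fun h : ℝ => (h * k₀) • u₀) ((1 * k₀) • u₀) 0 := by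
        exact ((hasDerivAt_id (0:ℝ)).mul_const k₀).smul_const u₀
      simpa using this.const_add x₀
  have hψ : HasDerivAt (fun h : ℝ => φ (t₀ + h) (x₀ + (h * k₀) • u₀))
      (L (1, k₀ • u₀)) 0 := by
    have hd2 : HasFDerivAt (fun p : ℝ × EuclideanSpace ℝ (Fin d) => φ p.1 p.2) L
        (t₀ + 0, x₀ + ((0:ℝ) * k₀) • u₀) := by simpa using hdiff
    have := hd2.comp_hasDerivAt 0 hcurve
    exact this
  have hslope : Tendsto (fun h : ℝ => (φ (t₀ + h) (x₀ + (h * k₀) • u₀) - φ t₀ x₀) / h)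
      (nhdsWithin 0 (Set.Ioi 0)) (nhds (L (1, k₀ • u₀))) := by
    have := hasDerivAt_iff_tendsto_slope.mp hψ
    have h2 := this.mono_left (nhdsWithin_mono 0 (by
      intro x hx
      exact ne_of_gt hx : Set.Ioi (0:ℝ) ⊆ {(0:ℝ)}ᶜ))
    refine h2.congr' ?_
    filter_upwards [self_mem_nhdsWithin] with h hh
    simp [slope, hh, div_eq_inv_mul]
  have hLval : L (1, k₀ • u₀) = pt + k₀ * (inner ℝ g u₀ : ℝ) := by
    rw [hL]; rw [real_inner_smul_right]; ring
  have key : (inner ℝ g u₀ : ℝ) = -‖g‖ ↔ u₀ = -(‖g‖⁻¹ • g) := by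
    constructor
    · intro h
      have h' : (inner ℝ g (-u₀) : ℝ) = ‖g‖ * ‖-u₀‖ := by
        rw [inner_neg_right, h]; simp [hu]
      have := (inner_eq_norm_mul_iff_real).mp h'
      -- ‖-u₀‖ • g = ‖g‖ • (-u₀)
      rw [norm_neg, hu, one_smul] at this
      have : u₀ = -(‖g‖⁻¹ • g) := by
        rw [← neg_neg u₀]
        congr 1
        rw [eq_comm, inv_smul_eq_iff₀ (ne_of_gt hgn)]
        exact this
      exact this
    · intro h
      rw [h, inner_neg_right, real_inner_smul_right, real_inner_self_eq_norm_sq]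
      field_simp
  constructor
  · intro htend
    have heq : L (1, k₀ • u₀) = -1 := tendsto_nhds_unique hslope htend
    rw [hLval] at heq
    apply key.mp
    have hpt : pt = ‖g‖ * k₀ - 1 := by linarith
    have : k₀ * (inner ℝ g u₀ : ℝ) = -(k₀ * ‖g‖) := by rw [hpt] at heq; linarith
    have := mul_left_cancel₀ (ne_of_gt hk₀) (by linarith : k₀ * (inner ℝ g u₀ : ℝ) = k₀ * (-‖g‖))
    exact this
  · intro h
    have hin : (inner ℝ g u₀ : ℝ) = -‖g‖ := key.mpr h
    have : L (1, k₀ • u₀) = -1 := by rw [hLval, hin]; nlinarith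
    rw [← this]
    exact hslope
end

section
/- Under the hypotheses that k is Lipschitz and K_min ≤ k ≤ K_max with K_min > 0, and that Ω̄ satisfies the geodesic-distance equivalence (H1) with constant D, the value function φ(t₀,x₀) of the minimal time problem satisfies φ(t₀,x₀) ≤ (D/K_min) · d(x₀, Γ) for all (t₀,x₀) ∈ ℝ≥0 × Ω̄, where d(x₀,Γ) = inf_{y∈Γ} |x₀ - y|. In particular φ is bounded. -/
open MeasureTheory Set Filter intervalIntegral Topology
set_option maxHeartbeats 1000000

lemma lipschitz_norm_deriv_le {E : Type*} [NormedAddCommGroup E] [NormedSpace ℝ E]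
    {K : NNReal} {f : ℝ → E} (hf : LipschitzWith K f) (t : ℝ) : ‖deriv f t‖ ≤ K := by
  by_cases hd : DifferentiableAt ℝ f t
  · have h := hd.hasDerivAt
    rw [hasDerivAt_iff_tendsto_slope] at h
    refine le_of_tendsto h.norm ?_
    filter_upwards [self_mem_nhdsWithin] with y hy
    have hyt : y - t ≠ 0 := sub_ne_zero.2 hy
    rw [slope_def_module, norm_smul, norm_inv, Real.norm_eq_abs]
    have hb : ‖f y - f t‖ ≤ K * |y - t| := by
      have := hf.dist_le_mul y t
      simpa [dist_eq_norm, Real.dist_eq] using this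
    calc |y - t|⁻¹ * ‖f y - f t‖ ≤ |y - t|⁻¹ * (K * |y - t|) :=
          mul_le_mul_of_nonneg_left hb (inv_nonneg.2 (abs_nonneg _))
      _ = K := by field_simp
  · simp [deriv_zero_of_not_differentiableAt hd]

lemma lipschitz_integral_deriv {E : Type*} [NormedAddCommGroup E] [NormedSpace ℝ E]
    [FiniteDimensional ℝ E] {K : NNReal} {f : ℝ → E} (hf : LipschitzWith K f)
    {a b : ℝ} (hab : a ≤ b) : ∫ s in a..b, deriv f s = f b - f a := by
  have hcont : Continuous f := hf.continuous
  set h : ℕ → ℝ := fun n => ((n : ℝ) + 1)⁻¹ with hh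
  have hpos : ∀ n, 0 < h n := fun n => by positivity
  have hto : Tendsto h atTop (𝓝 0) := by
    simpa [hh, one_div] using (tendsto_one_div_add_atTop_nhds_zero_nat :
      Tendsto (fun n : ℕ => 1 / ((n : ℝ) + 1)) atTop (𝓝 0))
  have hseq : ∀ c : ℝ, Tendsto (fun n => c + h n) atTop (𝓝[≠] c) := by
    intro c
    apply tendsto_nhdsWithin_of_tendsto_nhds_of_eventually_within
    · simpa using tendsto_const_nhds.add hto
    · filter_upwards with n
      simp only [mem_compl_iff, mem_singleton_iff]
      have := hpos n
      intro hcc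
      nlinarith
  have key : ∀ c : ℝ, Tendsto (fun n => (h n)⁻¹ • ∫ x in c..(c + h n), f x) atTop (𝓝 (f c)) := by
    intro c
    have H := (hcont.integral_hasStrictDerivAt c c).hasDerivAt
    rw [hasDerivAt_iff_tendsto_slope] at H
    have H2 := H.comp (hseq c)
    convert H2 using 2 with n
    rw [Function.comp_apply, slope_def_module]
    simp
  have intF : ∀ n, (∫ s in a..b, (h n)⁻¹ • (f (s + h n) - f s)) =
      (h n)⁻¹ • (∫ x in b..(b + h n), f x) - (h n)⁻¹ • (∫ x in a..(a + h n), f x) := by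
    intro n
    have hi1 : IntervalIntegrable (fun s => f (s + h n)) volume a b :=
      (hcont.comp (continuous_id.add continuous_const)).intervalIntegrable _ _
    have hi2 : IntervalIntegrable f volume a b := hcont.intervalIntegrable _ _
    rw [intervalIntegral.integral_smul, intervalIntegral.integral_sub hi1 hi2,
      intervalIntegral.integral_comp_add_right, ← smul_sub]
    congr 1
    have ch1 : (∫ x in a..(a + h n), f x) + (∫ x in (a + h n)..(b + h n), f x)
        = ∫ x in a..(b + h n), f x :=
      intervalIntegral.integral_add_adjacent_intervals (hcont.intervalIntegrable _ _)
        (hcont.intervalIntegrable _ _)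
    have ch2 : (∫ x in a..b, f x) + (∫ x in b..(b + h n), f x)
        = ∫ x in a..(b + h n), f x :=
      intervalIntegral.integral_add_adjacent_intervals (hcont.intervalIntegrable _ _)
        (hcont.intervalIntegrable _ _)
    have e := ch1.trans ch2.symm
    rw [sub_eq_sub_iff_add_eq_add]
    rw [add_comm] at e
    rw [e, add_comm]
  have meas : ∀ n, AEStronglyMeasurable (fun s => (h n)⁻¹ • (f (s + h n) - f s))
      (volume.restrict (Ioc a b)) := fun n =>
    (continuous_const.smul ((hcont.comp (continuous_id.add continuous_const)).sub
      hcont)).aestronglyMeasurable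
  have hbound : ∀ n, ∀ᵐ s ∂(volume.restrict (Ioc a b)),
      ‖(h n)⁻¹ • (f (s + h n) - f s)‖ ≤ (K : ℝ) := by
    intro n
    filter_upwards with s
    rw [norm_smul, norm_inv, Real.norm_eq_abs, abs_of_pos (hpos n)]
    have hb : ‖f (s + h n) - f s‖ ≤ K * h n := by
      have := hf.dist_le_mul (s + h n) s
      simpa [dist_eq_norm, Real.dist_eq, abs_of_pos (hpos n)] using this
    calc (h n)⁻¹ * ‖f (s + h n) - f s‖ ≤ (h n)⁻¹ * (K * h n) :=
          mul_le_mul_of_nonneg_left hb (inv_nonneg.2 (hpos n).le)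
      _ = K := by rw [mul_comm (K : ℝ), inv_mul_cancel_left₀ (hpos n).ne']
  have hlim : ∀ᵐ s ∂(volume.restrict (Ioc a b)),
      Tendsto (fun n => (h n)⁻¹ • (f (s + h n) - f s)) atTop (𝓝 (deriv f s)) := by
    apply ae_restrict_of_ae
    filter_upwards [hf.ae_differentiableAt (μ := volume)] with s hs
    have H := hs.hasDerivAt
    rw [hasDerivAt_iff_tendsto_slope] at H
    have H2 := H.comp (hseq s)
    convert H2 using 2 with n
    rw [Function.comp_apply, slope_def_module]
    simp
  have bint : Integrable (fun _ : ℝ => (K : ℝ)) (volume.restrict (Ioc a b)) :=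
    integrableOn_const measure_Ioc_lt_top.ne
  have main : Tendsto (fun n => ∫ s, (h n)⁻¹ • (f (s + h n) - f s) ∂(volume.restrict (Ioc a b)))
      atTop (𝓝 (∫ s, deriv f s ∂(volume.restrict (Ioc a b)))) :=
    by
    refine tendsto_integral_filter_of_dominated_convergence (fun _ => (K : ℝ)) ?_ ?_ bint ?_
    · exact Eventually.of_forall meas
    · exact Eventually.of_forall hbound
    · exact hlim
  have main' : Tendsto (fun n => ∫ s in a..b, (h n)⁻¹ • (f (s + h n) - f s)) atTop
      (𝓝 (∫ s in a..b, deriv f s)) := by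
    simpa only [intervalIntegral.integral_of_le hab] using main
  simp only [intF] at main'
  exact tendsto_nhds_unique main' ((key b).sub (key a))

/-- the value function of the minimal time problem (defined as the infimum
of arrival times over admissible trajectories in `Ω̄`) satisfies
`φ(t₀,x₀) ≤ (D/Kmin) d(x₀,Γ)`; in particular it is bounded. -/
theorem stmt13 {d : ℕ} (Ω Γ : Set (EuclideanSpace ℝ (Fin d)))
    (hΩo : IsOpen Ω) (hΩb : Bornology.IsBounded Ω)
    (hΓcl : IsClosed Γ) (hΓne : Γ.Nonempty) (hΓsub : Γ ⊆ closure Ω)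
    (D : ℝ) (hD : 0 < D)
    (hgeo : ∀ x ∈ closure Ω, ∀ y ∈ closure Ω, ∃ ℓ : ℝ, 0 ≤ ℓ ∧ ℓ ≤ D * ‖x - y‖ ∧
      ∃ c : ℝ → EuclideanSpace ℝ (Fin d), c 0 = x ∧ c ℓ = y ∧
        (∀ s ∈ Set.Icc (0:ℝ) ℓ, c s ∈ closure Ω) ∧ LipschitzOnWith 1 c (Set.Icc (0:ℝ) ℓ))
    (k : ℝ → EuclideanSpace ℝ (Fin d) → ℝ) (Lk : NNReal)
    (hkLip : LipschitzOnWith Lk (fun p : ℝ × EuclideanSpace ℝ (Fin d) => k p.1 p.2)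
      (Set.Ici (0:ℝ) ×ˢ closure Ω))
    (Kmin Kmax : ℝ) (hKmin : 0 < Kmin)
    (hk : ∀ t ≥ (0:ℝ), ∀ x ∈ closure Ω, Kmin ≤ k t x ∧ k t x ≤ Kmax)
    (t₀ : ℝ) (ht₀ : 0 ≤ t₀) (x₀ : EuclideanSpace ℝ (Fin d)) (hx₀ : x₀ ∈ closure Ω) :
    sInf {T : ℝ | 0 ≤ T ∧
        ∃ (γ u : ℝ → EuclideanSpace ℝ (Fin d)),
          γ t₀ = x₀ ∧ Continuous γ ∧
          (∀ t ≥ t₀, γ t ∈ closure Ω) ∧ (∀ t, ‖u t‖ ≤ 1) ∧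
          (∀ t ≥ t₀, γ t = x₀ + ∫ s in t₀..t, k s (γ s) • u s) ∧
          γ (t₀ + T) ∈ Γ}
      ≤ D / Kmin * Metric.infDist x₀ Γ := by

  -- nearest point of the target
  obtain ⟨y, hyΓ, hdy⟩ := hΓcl.exists_infDist_eq_dist hΓne x₀
  have hyΩ : y ∈ closure Ω := hΓsub hyΓ
  obtain ⟨ℓ, hℓ0, hℓle, c, hc0, hcℓ, hcmem, hclip⟩ := hgeo x₀ hx₀ y hyΩ
  set Kn : NNReal := ⟨Kmin, hKmin.le⟩ with hKn
  set T : ℝ := ℓ / Kmin with hTdef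
  have hT0 : 0 ≤ T := div_nonneg hℓ0 hKmin.le
  set σ : ℝ → ℝ := fun t => max 0 (min (Kmin * (t - t₀)) ℓ) with hσdef
  have hσmem : ∀ t, σ t ∈ Icc (0:ℝ) ℓ :=
    fun t => ⟨le_max_left _ _, max_le hℓ0 (min_le_right _ _)⟩
  set γ : ℝ → EuclideanSpace ℝ (Fin d) := fun t => c (σ t) with hγdef
  have hσlip : LipschitzWith Kn σ := by
    refine LipschitzWith.of_dist_le_mul fun s t => ?_
    simp only [hσdef, Real.dist_eq]
    calc |max 0 (min (Kmin * (s - t₀)) ℓ) - max 0 (min (Kmin * (t - t₀)) ℓ)|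
        ≤ |min (Kmin * (s - t₀)) ℓ - min (Kmin * (t - t₀)) ℓ| := by
          have := abs_max_sub_max_le_abs (min (Kmin * (s - t₀)) ℓ) (min (Kmin * (t - t₀)) ℓ) 0
          simpa [max_comm] using this
      _ ≤ max |Kmin * (s - t₀) - Kmin * (t - t₀)| |ℓ - ℓ| :=
          abs_min_sub_min_le_max _ _ _ _
      _ ≤ |Kmin * (s - t₀) - Kmin * (t - t₀)| := by
          simp [abs_nonneg]
      _ = Kmin * |s - t| := by
          rw [← mul_sub, abs_mul, abs_of_pos hKmin]
          ring_nf
      _ = (Kn : ℝ) * |s - t| := rfl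
  have hγlip : LipschitzWith Kn γ := by
    refine LipschitzWith.of_dist_le_mul fun s t => ?_
    have h1 : dist (c (σ s)) (c (σ t)) ≤ 1 * dist (σ s) (σ t) :=
      hclip.dist_le_mul _ (hσmem s) _ (hσmem t)
    calc dist (γ s) (γ t) ≤ 1 * dist (σ s) (σ t) := h1
      _ = dist (σ s) (σ t) := one_mul _
      _ ≤ (Kn : ℝ) * dist s t := hσlip.dist_le_mul s t
  have hγcont : Continuous γ := hγlip.continuous
  have hσt₀ : σ t₀ = 0 := by
    simp [hσdef, hℓ0]
  have hγt₀ : γ t₀ = x₀ := by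
    rw [hγdef]
    simp only
    rw [hσt₀, hc0]
  have hγmem : ∀ t, γ t ∈ closure Ω := fun t => hcmem _ (hσmem t)
  have hγT : γ (t₀ + T) = y := by
    have : σ (t₀ + T) = ℓ := by
      simp only [hσdef, add_sub_cancel_left, hTdef]
      rw [mul_div_cancel₀ _ (ne_of_gt hKmin)]
      simp [hℓ0]
    rw [hγdef]
    simp only
    rw [this, hcℓ]
  have hderiv_le : ∀ t, ‖deriv γ t‖ ≤ Kmin := fun t => lipschitz_norm_deriv_le hγlip t
  -- the control
  set u : ℝ → EuclideanSpace ℝ (Fin d) :=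
    fun t => if Kmin ≤ k t (γ t) then (k t (γ t))⁻¹ • deriv γ t else 0 with hudef
  have hu1 : ∀ t, ‖u t‖ ≤ 1 := by
    intro t
    rw [hudef]
    simp only
    split_ifs with hkt
    · have hkpos : 0 < k t (γ t) := lt_of_lt_of_le hKmin hkt
      rw [norm_smul, norm_inv, Real.norm_eq_abs, abs_of_pos hkpos]
      calc (k t (γ t))⁻¹ * ‖deriv γ t‖ ≤ (k t (γ t))⁻¹ * Kmin :=
            mul_le_mul_of_nonneg_left (hderiv_le t) (inv_nonneg.2 hkpos.le)
        _ ≤ Kmin⁻¹ * Kmin := by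
            have : (k t (γ t))⁻¹ ≤ Kmin⁻¹ := inv_anti₀ hKmin hkt
            exact mul_le_mul_of_nonneg_right this hKmin.le
        _ = 1 := inv_mul_cancel₀ (ne_of_gt hKmin)
    · simp
  have hint : ∀ t ≥ t₀, γ t = x₀ + ∫ s in t₀..t, k s (γ s) • u s := by
    intro t ht
    have hcongr : ∫ s in t₀..t, k s (γ s) • u s = ∫ s in t₀..t, deriv γ s := by
      apply intervalIntegral.integral_congr
      intro s hs
      rw [uIcc_of_le ht] at hs
      have hs0 : (0:ℝ) ≤ s := le_trans ht₀ hs.1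
      have hks : Kmin ≤ k s (γ s) := (hk s hs0 (γ s) (hγmem s)).1
      have hkne : k s (γ s) ≠ 0 := ne_of_gt (lt_of_lt_of_le hKmin hks)
      simp only [hudef, if_pos hks]
      rw [smul_inv_smul₀ hkne]
    rw [hcongr, lipschitz_integral_deriv hγlip ht, hγt₀]
    abel
  -- membership and conclusion
  have hmem : T ∈ {T : ℝ | 0 ≤ T ∧
      ∃ (γ u : ℝ → EuclideanSpace ℝ (Fin d)),
        γ t₀ = x₀ ∧ Continuous γ ∧
        (∀ t ≥ t₀, γ t ∈ closure Ω) ∧ (∀ t, ‖u t‖ ≤ 1) ∧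
        (∀ t ≥ t₀, γ t = x₀ + ∫ s in t₀..t, k s (γ s) • u s) ∧
        γ (t₀ + T) ∈ Γ} := by
    refine ⟨hT0, γ, u, hγt₀, hγcont, fun t _ => hγmem t, hu1, hint, ?_⟩
    rw [hγT]; exact hyΓ
  have hbdd : BddBelow {T : ℝ | 0 ≤ T ∧
      ∃ (γ u : ℝ → EuclideanSpace ℝ (Fin d)),
        γ t₀ = x₀ ∧ Continuous γ ∧
        (∀ t ≥ t₀, γ t ∈ closure Ω) ∧ (∀ t, ‖u t‖ ≤ 1) ∧
        (∀ t ≥ t₀, γ t = x₀ + ∫ s in t₀..t, k s (γ s) • u s) ∧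
        γ (t₀ + T) ∈ Γ} := ⟨0, fun x hx => hx.1⟩
  refine le_trans (csInf_le hbdd hmem) ?_
  have hnorm : ‖x₀ - y‖ = Metric.infDist x₀ Γ := by
    rw [hdy, dist_eq_norm]
  rw [hTdef, div_mul_eq_mul_div]
  gcongr
  calc ℓ ≤ D * ‖x₀ - y‖ := hℓle
    _ = D * Metric.infDist x₀ Γ := by rw [hnorm]
end
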